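/- Let ι : ℕ → ℕ be an injective monotone map with infinite complement, and define F on the standard Hilbert module H_A (over a unital C*-algebra A) by F(e_k) = e_{ι(k)} on the standard basis, extended A-linearly and continuously. Then F is an adjointable isometry whose range is the closed submodule generated by {e_{ι(k)}}, this range is orthogonally complementable with non-finitely-generated complement, and F is upper semi-A-Fredholm but not A-Fredholm. -/

import Mathlib

open scoped ENNReal
set_option linter.unusedSectionVars false
set_option maxHeartbeats 1000000

namespace Shift18

variable {A : Type*} [NormedRing A] [StarRing A] [CStarRing A] [CompleteSpace A]
  [NormOneClass A] [NormedAlgebra ℂ A] [StarModule ℂ A]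

open Classical in
noncomputable def fraw (ι : ℕ → ℕ) (x : ℕ → A) : ℕ → A :=
  fun n => if h : ∃ k, ι k = n then x h.choose else 0

theorem fraw_apply (ι : ℕ → ℕ) (hinj : Function.Injective ι) (x : ℕ → A) (k : ℕ) :
    fraw ι x (ι k) = x k := by
  have h : ∃ k', ι k' = ι k := ⟨k, rfl⟩
  simp only [fraw, dif_pos h]
  congr 1
  exact hinj h.choose_spec

theorem fraw_not (ι : ℕ → ℕ) (x : ℕ → A) {n : ℕ} (hn : n ∉ Set.range ι) :
    fraw ι x n = 0 := by
  simp only [fraw]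
  exact dif_neg hn

theorem memℓp_fraw (ι : ℕ → ℕ) (hinj : Function.Injective ι) (x : ℕ → A)
    (hx : Memℓp x 2) : Memℓp (fraw ι x) 2 := by
  apply memℓp_gen
  have hs : Summable fun k => ‖x k‖ ^ (2 : ℝ≥0∞).toReal :=
    (memℓp_gen_iff (by norm_num)).1 hx
  refine (hinj.summable_iff (fun n hn => ?_)).1 (hs.congr fun k => ?_)
  · rw [fraw_not ι x hn, norm_zero, Real.zero_rpow (by norm_num)]
  · simp only [Function.comp_apply, fraw_apply ι hinj]

variable (A) in
noncomputable def Fli (ι : ℕ → ℕ) (hinj : Function.Injective ι) :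
    lp (fun _ : ℕ => A) 2 →ₗᵢ[ℂ] lp (fun _ : ℕ => A) 2 where
  toFun x := ⟨fraw ι x, memℓp_fraw ι hinj x (lp.memℓp x)⟩
  map_add' x y := by
    apply lp.ext
    funext n
    show fraw ι (↑(x + y)) n = fraw ι x n + fraw ι y n
    by_cases h : n ∈ Set.range ι
    · obtain ⟨k, rfl⟩ := h
      simp only [fraw_apply ι hinj, lp.coeFn_add, Pi.add_apply]
    · simp only [fraw_not ι _ h, add_zero]
  map_smul' c x := by
    apply lp.ext
    funext n
    show fraw ι (↑(c • x)) n = c • fraw ι x n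
    by_cases h : n ∈ Set.range ι
    · obtain ⟨k, rfl⟩ := h
      simp only [fraw_apply ι hinj, lp.coeFn_smul, Pi.smul_apply]
    · simp only [fraw_not ι _ h, smul_zero]
  norm_map' x := by
    rw [lp.norm_eq_tsum_rpow (by norm_num) _, lp.norm_eq_tsum_rpow (by norm_num) x]
    congr 1
    refine (hinj.tsum_eq (f := fun n => ‖fraw ι (↑x) n‖ ^ (2 : ℝ≥0∞).toReal) ?_).symm.trans ?_
    · intro n hn
      simp only [Function.mem_support, ne_eq] at hn
      by_contra hmem
      exact hn (by rw [fraw_not ι _ hmem, norm_zero, Real.zero_rpow (by norm_num)])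
    · exact tsum_congr fun k => by rw [fraw_apply ι hinj]

theorem memℓp_graw (ι : ℕ → ℕ) (hinj : Function.Injective ι) (y : lp (fun _ : ℕ => A) 2) :
    Memℓp (fun k => y (ι k)) 2 := by
  apply memℓp_gen
  have hs : Summable fun n => ‖y n‖ ^ (2 : ℝ≥0∞).toReal :=
    (memℓp_gen_iff (by norm_num)).1 (lp.memℓp y)
  exact hs.comp_injective hinj

variable (A) in
noncomputable def G (ι : ℕ → ℕ) (hinj : Function.Injective ι) :
    lp (fun _ : ℕ => A) 2 →L[ℂ] lp (fun _ : ℕ => A) 2 := by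
  refine LinearMap.mkContinuous
    { toFun := fun y => ⟨fun k => y (ι k), memℓp_graw ι hinj y⟩
      map_add' := fun x y => by
        apply lp.ext; funext k
        show (x + y) (ι k) = x (ι k) + y (ι k)
        simp only [lp.coeFn_add, Pi.add_apply]
      map_smul' := fun c y => by
        apply lp.ext; funext k
        show (c • y) (ι k) = c • y (ι k)
        simp only [lp.coeFn_smul, Pi.smul_apply] }
    1 (fun y => ?_)
  rw [one_mul]
  rw [lp.norm_eq_tsum_rpow (by norm_num), lp.norm_eq_tsum_rpow (by norm_num) y]
  apply Real.rpow_le_rpow (tsum_nonneg fun k => Real.rpow_nonneg (norm_nonneg _) _) _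
    (by norm_num)
  refine Summable.tsum_le_tsum_of_inj ι hinj (fun n _ => Real.rpow_nonneg (norm_nonneg _) _)
    (fun k => le_rfl) ?_ ((memℓp_gen_iff (by norm_num)).1 (lp.memℓp y))
  exact ((memℓp_gen_iff (by norm_num)).1 (lp.memℓp y)).comp_injective hinj

end Shift18


/-- Let `ι : ℕ → ℕ` be an injective monotone map with infinite complement,
and let `F` on `H_A = ℓ²(A)` (over a unital C*-algebra `A`) be given by `F(e_k) = e_{ι(k)}`.
Then `F` is an adjointable `A`-linear isometry, its range is the closed submodule of sequences
supported on `ι(ℕ)`, this range is complementable with non-finitely-generated complement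
(the sequences supported off `ι(ℕ)`); hence `F` is upper semi-`A`-Fredholm but not
`A`-Fredholm. -/
theorem shift_like_upper_not_fredholm
    {A : Type*} [NormedRing A] [StarRing A] [CStarRing A] [CompleteSpace A]
    [NormOneClass A] [NormedAlgebra ℂ A] [StarModule ℂ A]
    (ι : ℕ → ℕ) (hinj : Function.Injective ι) (hmono : Monotone ι)
    (hcof : (Set.range ι)ᶜ.Infinite) :
    ∃ F : lp (fun _ : ℕ => A) 2 →L[ℂ] lp (fun _ : ℕ => A) 2,
      -- defining formula: `F` reindexes along `ι`
      (∀ x k, F x (ι k) = x k) ∧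
      (∀ x n, n ∉ Set.range ι → F x n = 0) ∧
      -- `F` is an isometry
      (∀ x, ‖F x‖ = ‖x‖) ∧
      -- `A`-linearity: `F` commutes with the right `A`-module action
      (∀ (x y : lp (fun _ : ℕ => A) 2) (a : A),
        (∀ n, y n = x n * a) → ∀ n, F y n = F x n * a) ∧
      -- adjointability with respect to the `A`-valued inner product `⟨x,y⟩ = Σ (xₙ)* yₙ`
      (∃ G : lp (fun _ : ℕ => A) 2 →L[ℂ] lp (fun _ : ℕ => A) 2,
        ∀ x y, ∑' n, star (F x n) * y n = ∑' n, star (x n) * G y n) ∧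
      -- the range of `F` is the closed submodule generated by `{e_{ι(k)}}`
      (LinearMap.range (F : lp (fun _ : ℕ => A) 2 →ₗ[ℂ] lp (fun _ : ℕ => A) 2) : Set (lp (fun _ : ℕ => A) 2)) =
        {y | ∀ n, n ∉ Set.range ι → y n = 0} ∧
      IsClosed (Set.range F) ∧
      -- the range is complementable, with non-finitely-generated complement; in particular
      -- `F` is upper semi-`A`-Fredholm but not `A`-Fredholm
      (∃ N : Submodule ℂ (lp (fun _ : ℕ => A) 2),
        (N : Set (lp (fun _ : ℕ => A) 2)) = {y | ∀ n, n ∈ Set.range ι → y n = 0} ∧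
        IsCompl (LinearMap.range (F : lp (fun _ : ℕ => A) 2 →ₗ[ℂ] lp (fun _ : ℕ => A) 2)) N ∧
        ¬ ∃ (m : ℕ) (g : Fin m → lp (fun _ : ℕ => A) 2),
            (∀ i, g i ∈ N) ∧
            ∀ y ∈ N, ∃ a : Fin m → A, ∀ n, y n = ∑ i, g i n * a i) := by
  classical
  set H := lp (fun _ : ℕ => A) 2 with hH
  let Fli := Shift18.Fli A ι hinj
  let F : H →L[ℂ] H := Fli.toContinuousLinearMap
  let G := Shift18.G A ι hinj
  have hFι : ∀ (x : H) k, F x (ι k) = x k := fun x k => Shift18.fraw_apply ι hinj _ k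
  have hF0 : ∀ (x : H) n, n ∉ Set.range ι → F x n = 0 := fun x n hn =>
    Shift18.fraw_not ι _ hn
  have hGap : ∀ (y : H) k, G y k = y (ι k) := fun y k => rfl
  have hFG : ∀ y : H, (∀ n, n ∉ Set.range ι → y n = 0) → F (G y) = y := by
    intro y hy
    apply lp.ext
    funext n
    by_cases h : n ∈ Set.range ι
    · obtain ⟨k, rfl⟩ := h
      rw [hFι, hGap]
    · rw [hF0 _ _ h, hy n h]
  have hrange : (LinearMap.range (F : H →ₗ[ℂ] H) : Set H) = {y | ∀ n, n ∉ Set.range ι → y n = 0} := by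
    ext y
    simp only [SetLike.mem_coe, LinearMap.mem_range, Set.mem_setOf_eq]
    constructor
    · rintro ⟨x, rfl⟩ n hn
      exact hF0 x n hn
    · intro hy
      exact ⟨G y, hFG y hy⟩
  let N : Submodule ℂ H :=
    { carrier := {y : H | ∀ n, n ∈ Set.range ι → y n = 0}
      add_mem' := fun {x y} hx hy n hn => by
        rw [lp.coeFn_add, Pi.add_apply, hx n hn, hy n hn, add_zero]
      zero_mem' := fun n hn => by rw [lp.coeFn_zero, Pi.zero_apply]
      smul_mem' := fun c x hx n hn => by
        rw [lp.coeFn_smul, Pi.smul_apply, hx n hn, smul_zero] }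
  refine ⟨F, hFι, hF0, fun x => Fli.norm_map x, ?_, ⟨G, ?_⟩, hrange, ?_, N, rfl, ?_, ?_⟩
  · -- A-linearity
    intro x y a hxy n
    by_cases h : n ∈ Set.range ι
    · obtain ⟨k, rfl⟩ := h
      rw [hFι, hFι, hxy]
    · rw [hF0 _ _ h, hF0 _ _ h, zero_mul]
  · -- adjointability
    intro x y
    have hsupp : Function.support (fun n => star (F x n) * y n) ⊆ Set.range ι := by
      intro n hn
      by_contra h
      exact hn (by simp [hF0 x n h])
    refine (hinj.tsum_eq hsupp).symm.trans (tsum_congr fun k => ?_)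
    rw [hFι, hGap]
  · -- closed range
    have hco : (⇑F : H → H) = ⇑Fli := rfl
    rw [hco]
    exact Fli.isometry.isClosedEmbedding.isClosed_range
  · -- IsCompl
    constructor
    · rw [Submodule.disjoint_def]
      intro z hz hzN
      have hz' : z ∈ (LinearMap.range (F : H →ₗ[ℂ] H) : Set H) := hz
      rw [hrange] at hz'
      apply lp.ext
      funext n
      rw [lp.coeFn_zero, Pi.zero_apply]
      by_cases h : n ∈ Set.range ι
      · exact hzN n h
      · exact hz' n h
    · rw [codisjoint_iff, eq_top_iff]
      intro y _
      refine Submodule.mem_sup.mpr ⟨F (G y), LinearMap.mem_range_self _ _,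
        y - F (G y), ?_, by abel⟩
      intro n hn
      obtain ⟨k, rfl⟩ := hn
      rw [lp.coeFn_sub, Pi.sub_apply, hFι, hGap, sub_self]
  · -- not finitely generated
    rintro ⟨m, g, hgN, hgen⟩
    let f : ℕ → ℕ := fun k => (Set.Infinite.natEmbedding _ hcof k : ℕ)
    have hfinj : Function.Injective f := fun a b hab =>
      (Set.Infinite.natEmbedding _ hcof).injective (Subtype.ext hab)
    have hfJ : ∀ k, f k ∉ Set.range ι := fun k => ((Set.Infinite.natEmbedding _ hcof) k).2
    let r : ℕ → ℝ := fun n => ∑ i, ‖g i n‖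
    have hrpow : ∀ x : ℝ, 0 ≤ x → x ^ (2 : ℝ≥0∞).toReal = x ^ 2 := by
      intro x hx
      rw [show ((2:ℝ≥0∞)).toReal = ((2:ℕ):ℝ) by norm_num, Real.rpow_natCast]
    have hr0 : Filter.Tendsto (fun k => r (f k)) Filter.atTop (nhds 0) := by
      have hterm : ∀ i : Fin m,
          Filter.Tendsto (fun k => ‖g i (f k)‖) Filter.atTop (nhds 0) := by
        intro i
        have hs : Summable fun n => ‖g i n‖ ^ (2 : ℝ≥0∞).toReal :=
          (memℓp_gen_iff (by norm_num)).1 (lp.memℓp (g i))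
        have hs2 : Summable fun k => ‖g i (f k)‖ ^ (2 : ℝ≥0∞).toReal :=
          hs.comp_injective hfinj
        have ht := hs2.tendsto_atTop_zero
        have heq : ∀ k, ‖g i (f k)‖ = Real.sqrt (‖g i (f k)‖ ^ (2 : ℝ≥0∞).toReal) := by
          intro k
          rw [hrpow _ (norm_nonneg _), Real.sqrt_sq (norm_nonneg _)]
        exact (((Real.continuous_sqrt.tendsto' 0 0 Real.sqrt_zero).comp ht).congr
          fun k => (heq k).symm)
      simpa using tendsto_finset_sum Finset.univ (fun i _ => hterm i)
    have hev : ∀ j : ℕ, ∀ᶠ k in Filter.atTop, r (f k) ≤ (1/2 : ℝ) ^ j :=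
      fun j => hr0.eventually_le_const (by positivity)
    obtain ⟨φ, hφmono, hφ⟩ := Filter.extraction_forall_of_eventually hev
    let s : ℕ → ℕ := fun j => f (φ j)
    have hsinj : Function.Injective s := hfinj.comp hφmono.injective
    let yraw : ℕ → A := fun n =>
      if h : ∃ j, s j = n then (((h.choose : ℝ) + 1)⁻¹) • (1 : A) else 0
    have hys : ∀ j, yraw (s j) = (((j : ℝ) + 1)⁻¹) • 1 := by
      intro j
      have h : ∃ j', s j' = s j := ⟨j, rfl⟩
      simp only [yraw, dif_pos h]
      rw [hsinj h.choose_spec]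
    have hy0 : ∀ n, n ∉ Set.range s → yraw n = 0 := fun n hn => dif_neg hn
    have hnorm : ∀ j, ‖yraw (s j)‖ = ((j : ℝ) + 1)⁻¹ := by
      intro j
      rw [hys j, norm_smul, norm_one, mul_one, Real.norm_eq_abs,
        abs_of_pos (by positivity)]
    have hmem : Memℓp yraw 2 := by
      apply memℓp_gen
      refine (hsinj.summable_iff (fun n hn => ?_)).1 ?_
      · rw [hy0 n hn, norm_zero, Real.zero_rpow (by norm_num)]
      · have hbase : Summable fun j : ℕ => (((j : ℝ) + 1)⁻¹) ^ 2 := by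
          have h0 := Real.summable_one_div_nat_pow.mpr (show 1 < 2 by norm_num)
          have h1 := (summable_nat_add_iff 1).2 h0
          refine h1.congr fun j => ?_
          push_cast
          rw [one_div, inv_pow]
        refine hbase.congr fun j => ?_
        simp only [Function.comp_apply]
        rw [hnorm j, hrpow _ (by positivity)]
    let y : H := ⟨yraw, hmem⟩
    have hyN : y ∈ N := by
      intro n hn
      refine hy0 n fun hmem' => ?_
      obtain ⟨j, rfl⟩ := hmem'
      exact hfJ (φ j) hn
    obtain ⟨a, ha⟩ := hgen y hyN
    set M : ℝ := 1 + ∑ i, ‖a i‖ with hM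
    have hMpos : 0 < M := by positivity
    have haM : ∀ i, ‖a i‖ ≤ M := fun i =>
      (Finset.single_le_sum (fun i _ => norm_nonneg (a i)) (Finset.mem_univ i)).trans
        (le_add_of_nonneg_left zero_le_one)
    have key : ∀ j : ℕ, ((j : ℝ) + 1)⁻¹ ≤ M * (1/2) ^ j := by
      intro j
      have h1 : y (s j) = ∑ i, g i (s j) * a i := ha (s j)
      have h2 : ‖y (s j)‖ = ((j : ℝ) + 1)⁻¹ := hnorm j
      calc ((j : ℝ) + 1)⁻¹ = ‖∑ i, g i (s j) * a i‖ := by rw [← h1, h2]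
        _ ≤ ∑ i, ‖g i (s j) * a i‖ := norm_sum_le _ _
        _ ≤ ∑ i, ‖g i (s j)‖ * M := Finset.sum_le_sum fun i _ =>
            (norm_mul_le _ _).trans (mul_le_mul_of_nonneg_left (haM i) (norm_nonneg _))
        _ = r (s j) * M := by rw [Finset.sum_mul]
        _ ≤ (1/2) ^ j * M := mul_le_mul_of_nonneg_right (hφ j) hMpos.le
        _ = M * (1/2) ^ j := mul_comm _ _
    have hsum : Summable fun j : ℕ => ((j : ℝ) + 1)⁻¹ :=
      Summable.of_nonneg_of_le (fun j => by positivity) key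
        (summable_geometric_two.mul_left M)
    have hfin : Summable fun n : ℕ => 1 / (n : ℝ) := by
      refine (summable_nat_add_iff 1).1 ?_
      refine hsum.congr fun j => ?_
      push_cast
      rw [one_div]
    exact Real.not_summable_one_div_natCast hfin
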